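/- Stability of the continuous problem: if L y := ε y'' + a y' - b y = f on (0,d)∪(d,1), with a(x) ≤ -α₁ < 0 on (0,d), a(x) ≥ α₂ > 0 on (d,1), b ≥ 0, y ∈ C⁰[0,1] ∩ C²((0,d)∪(d,1)), [y'](d) = 0, then ‖y‖_∞ ≤ max(|y(0)|, |y(1)|) + ‖f‖_∞/θ where θ = min(α₁/d, α₂/(1-d)). -/

import Mathlib

open Set Filter Topology

/-- Second-derivative necessary condition at a local minimum. -/
lemma deriv2_nonneg_of_isLocalMin {w : ℝ → ℝ} {x0 : ℝ} (h : IsLocalMin w x0)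
    (hw : DifferentiableAt ℝ w x0) (hw2 : DifferentiableAt ℝ (deriv w) x0) :
    0 ≤ deriv (deriv w) x0 := by
  by_contra hneg
  push_neg at hneg
  have h0 : deriv w x0 = 0 := h.deriv_eq_zero
  have hslope : Tendsto (slope (deriv w) x0) (𝓝[≠] x0) (𝓝 (deriv (deriv w) x0)) :=
    hasDerivAt_iff_tendsto_slope.mp hw2.hasDerivAt
  have hev : ∀ᶠ x in 𝓝[>] x0, slope (deriv w) x0 x < 0 := by
    have h1 : ∀ᶠ x in 𝓝[≠] x0, slope (deriv w) x0 x < 0 :=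
      hslope.eventually_lt_const hneg
    exact h1.filter_mono (nhdsWithin_mono _ (fun x hx => hx.ne'))
  have hev2 : ∀ᶠ x in 𝓝[>] x0, deriv w x < 0 := by
    filter_upwards [hev, self_mem_nhdsWithin] with x hx hx'
    have hxx : (0:ℝ) < x - x0 := sub_pos.2 hx'
    rw [slope_def_field, h0, sub_zero] at hx
    have := mul_neg_of_neg_of_pos hx hxx
    rwa [div_mul_cancel₀ _ hxx.ne'] at this
  have hloc : ∀ᶠ x in 𝓝[>] x0, w x0 ≤ w x := h.filter_mono nhdsWithin_le_nhds
  obtain ⟨u, hu, hsub⟩ := mem_nhdsGT_iff_exists_Ioo_subset.mp (hev2.and hloc)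
  have hu' : x0 < u := hu
  set m := (x0 + u) / 2 with hm
  have hmmem : m ∈ Ioo x0 u := ⟨by simp only [hm]; linarith, by simp only [hm]; linarith⟩
  have hanti : StrictAntiOn w (Icc x0 m) := by
    apply strictAntiOn_of_deriv_neg (convex_Icc _ _)
    · intro t ht
      rcases eq_or_lt_of_le ht.1 with h' | h'
      · exact (h' ▸ hw).continuousAt.continuousWithinAt
      · have ht' : t ∈ Ioo x0 u := ⟨h', lt_of_le_of_lt ht.2 hmmem.2⟩
        have : deriv w t < 0 := (hsub ht').1
        exact (differentiableAt_of_deriv_ne_zero this.ne).continuousAt.continuousWithinAt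
    · intro t ht
      rw [interior_Icc] at ht
      exact (hsub ⟨ht.1, lt_trans ht.2 hmmem.2⟩).1
  have h1 : w m < w x0 :=
    hanti (left_mem_Icc.2 hmmem.1.le) (right_mem_Icc.2 hmmem.1.le) hmmem.1
  have h2 : w x0 ≤ w m := (hsub hmmem).2
  linarith

/-- Comparison / minimum principle on `[0,1]` with a corner at `d`. -/
lemma key_nonneg (w : ℝ → ℝ) (d wl wr : ℝ) (hd0 : 0 < d) (hd1 : d < 1)
    (hw : ContinuousOn w (Icc 0 1))
    (h0 : 0 < w 0) (h1 : 0 < w 1)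
    (hdiff : ∀ x ∈ Ioo 0 d ∪ Ioo d 1,
      DifferentiableAt ℝ w x ∧ DifferentiableAt ℝ (deriv w) x)
    (hkey : ∀ x ∈ Ioo 0 d ∪ Ioo d 1,
      w x ≤ 0 → deriv w x = 0 → 0 ≤ deriv (deriv w) x → False)
    (hwl : HasDerivWithinAt w wl (Iic d) d)
    (hwr : HasDerivWithinAt w wr (Ici d) d)
    (hkink : wl ≤ 0 → 0 ≤ wr → False) :
    ∀ x ∈ Icc (0:ℝ) 1, 0 ≤ w x := by
  by_contra hc
  push_neg at hc
  obtain ⟨z, hz, hzneg⟩ := hc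
  obtain ⟨x0, hx0, hmin⟩ := isCompact_Icc.exists_isMinOn
    ⟨0, left_mem_Icc.2 zero_le_one⟩ hw
  have hneg : w x0 < 0 := (hmin hz).trans_lt hzneg
  have hx00 : x0 ≠ 0 := by intro h; rw [h] at hneg; linarith
  have hx01 : x0 ≠ 1 := by intro h; rw [h] at hneg; linarith
  have hx0I : x0 ∈ Ioo (0:ℝ) 1 :=
    ⟨hx0.1.lt_of_ne (Ne.symm hx00), hx0.2.lt_of_ne hx01⟩
  have hlocal : IsLocalMin w x0 := hmin.isLocalMin (Icc_mem_nhds hx0I.1 hx0I.2)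
  by_cases hxd : x0 = d
  · subst hxd
    apply hkink
    · -- left derivative nonpositive
      have hm : IsLocalMinOn w (Icc 0 x0) x0 :=
        (hmin.on_subset (Icc_subset_Icc le_rfl hx0.2)).localize
      have hcone : (-x0) ∈ posTangentConeAt (Icc 0 x0) x0 := by
        apply mem_posTangentConeAt_of_segment_subset
        rw [show x0 + -x0 = 0 by ring, segment_symm, segment_eq_Icc hx0.1]
      have hF : HasFDerivWithinAt w (ContinuousLinearMap.smulRight
          (1 : ℝ →L[ℝ] ℝ) wl) (Icc 0 x0) x0 :=
        (hwl.mono Icc_subset_Iic_self).hasFDerivWithinAt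
      have := hm.hasFDerivWithinAt_nonneg hF hcone
      simp only [ContinuousLinearMap.smulRight_apply, ContinuousLinearMap.one_apply,
        smul_eq_mul] at this
      nlinarith [hx0I.1]
    · -- right derivative nonnegative
      have hm : IsLocalMinOn w (Icc x0 1) x0 :=
        (hmin.on_subset (Icc_subset_Icc hx0.1 le_rfl)).localize
      have hcone : (1 - x0) ∈ posTangentConeAt (Icc x0 1) x0 := by
        apply mem_posTangentConeAt_of_segment_subset
        rw [show x0 + (1 - x0) = 1 by ring, segment_eq_Icc hx0.2]
      have hF : HasFDerivWithinAt w (ContinuousLinearMap.smulRight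
          (1 : ℝ →L[ℝ] ℝ) wr) (Icc x0 1) x0 :=
        (hwr.mono Icc_subset_Ici_self).hasFDerivWithinAt
      have := hm.hasFDerivWithinAt_nonneg hF hcone
      simp only [ContinuousLinearMap.smulRight_apply, ContinuousLinearMap.one_apply,
        smul_eq_mul] at this
      nlinarith [hx0I.2]
  · have hxu : x0 ∈ Ioo 0 d ∪ Ioo d 1 := by
      rcases lt_or_gt_of_ne hxd with h | h
      · exact Or.inl ⟨hx0I.1, h⟩
      · exact Or.inr ⟨h, hx0I.2⟩
    exact hkey x0 hxu hneg.le hlocal.deriv_eq_zero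
      (deriv2_nonneg_of_isLocalMin hlocal (hdiff x0 hxu).1 (hdiff x0 hxu).2)



set_option maxHeartbeats 1000000 in
/-- Stability of the continuous problem: if ε y'' + a y' - b y = f on
(0,d)∪(d,1) with a ≤ -α₁ on (0,d), a ≥ α₂ on (d,1), b ≥ 0, [y'](d) = 0,
then |y| ≤ max(|y 0|, |y 1|) + ‖f‖/θ with θ = min(α₁/d, α₂/(1-d)). -/
theorem stmt_17 (y a b f : ℝ → ℝ) (ε d α₁ α₂ F yd : ℝ)
    (hε : 0 < ε) (hd0 : 0 < d) (hd1 : d < 1)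
    (hα₁ : 0 < α₁) (hα₂ : 0 < α₂)
    (hy_cont : ContinuousOn y (Set.Icc 0 1))
    (hy_diff : ∀ x ∈ Set.Ioo 0 d ∪ Set.Ioo d 1,
      DifferentiableAt ℝ y x ∧ DifferentiableAt ℝ (deriv y) x)
    (haL : ∀ x ∈ Set.Ioo 0 d, a x ≤ -α₁)
    (haR : ∀ x ∈ Set.Ioo d 1, α₂ ≤ a x)
    (hb : ∀ x ∈ Set.Ioo 0 d ∪ Set.Ioo d 1, 0 ≤ b x)
    (heq : ∀ x ∈ Set.Ioo 0 d ∪ Set.Ioo d 1,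
      ε * deriv (deriv y) x + a x * deriv y x - b x * y x = f x)
    (hF : ∀ x ∈ Set.Ioo 0 d ∪ Set.Ioo d 1, |f x| ≤ F)
    (hLder : HasDerivWithinAt y yd (Set.Iic d) d)
    (hRder : HasDerivWithinAt y yd (Set.Ici d) d) :
    ∀ x ∈ Set.Icc (0 : ℝ) 1,
      |y x| ≤ max |y 0| |y 1| + F / min (α₁ / d) (α₂ / (1 - d)) := by
  intro x hx
  set θ := min (α₁ / d) (α₂ / (1 - d)) with hθdef
  set M := max |y 0| |y 1| with hMdef
  have h1d : (0:ℝ) < 1 - d := by linarith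
  have hθ : 0 < θ := lt_min (div_pos hα₁ hd0) (div_pos hα₂ h1d)
  have hF0 : 0 ≤ F :=
    (abs_nonneg _).trans (hF (d/2) (Or.inl ⟨half_pos hd0, half_lt_self hd0⟩))
  have hM0 : 0 ≤ M := (abs_nonneg (y 0)).trans (le_max_left _ _)
  -- main step : barrier argument for each δ > 0 and sign s
  have main : ∀ δ : ℝ, 0 < δ → ∀ s : ℝ, s = 1 ∨ s = -1 →
      s * y x ≤ M + δ + (F + δ) / θ := by
    intro δ hδ s hs
    have hsabs : ∀ t : ℝ, s * t ≤ |t| := by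
      intro t
      rcases hs with h | h
      · rw [h, one_mul]; exact le_abs_self t
      · rw [h, neg_one_mul]; exact neg_le_abs t
    set c := (F + δ) / θ with hc
    have hc0 : 0 < c := div_pos (by linarith) hθ
    have hθc : θ * c = F + δ := by rw [hc]; field_simp
    set ψ : ℝ → ℝ := fun t => if t ≤ d then t / d else (1 - t) / (1 - d) with hψ
    set w : ℝ → ℝ := fun t => M + δ + c * ψ t - s * y t with hwdef
    have hψc : Continuous ψ := by
      apply Continuous.if_le (continuous_id.div_const d) ((continuous_const.sub continuous_id).div_const (1-d)) continuous_id continuous_const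
      intro t ht
      simp only [Pi.sub_apply, id_eq] at ht ⊢
      rw [ht, div_self hd0.ne', div_self h1d.ne']
    have hwc : ContinuousOn w (Set.Icc 0 1) := by
      apply ContinuousOn.sub
      · exact (continuous_const.add (continuous_const.mul hψc)).continuousOn
      · exact continuousOn_const.mul hy_cont
    have hψ0 : ψ 0 = 0 := by simp [hψ, hd0.le]
    have hψ1 : ψ 1 = 0 := by simp [hψ, if_neg (not_le.2 hd1)]
    have hw0 : 0 < w 0 := by
      have h1 := hsabs (y 0)
      have h2 : |y 0| ≤ M := le_max_left _ _
      simp only [hwdef, hψ0, mul_zero, add_zero]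
      linarith
    have hw1 : 0 < w 1 := by
      have h1 := hsabs (y 1)
      have h2 : |y 1| ≤ M := le_max_right _ _
      simp only [hwdef, hψ1, mul_zero, add_zero]
      linarith
    -- derivative computations on the left interval
    have hgL : ∀ t ∈ Set.Ioo 0 d, HasDerivAt w (c * (1/d) - s * deriv y t) t := by
      intro t ht
      have hyd := (hy_diff t (Or.inl ht)).1
      have hlin : HasDerivAt (fun u : ℝ => M + δ + c * (u / d)) (c * (1/d)) t := by
        simpa using (((hasDerivAt_id t).div_const d).const_mul c).const_add (M + δ)
      have hmodel : HasDerivAt (fun u => M + δ + c * (u / d) - s * y u)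
          (c * (1/d) - s * deriv y t) t := hlin.sub (hyd.hasDerivAt.const_mul s)
      apply hmodel.congr_of_eventuallyEq
      filter_upwards [Iio_mem_nhds ht.2] with u hu
      have hud : u ≤ d := le_of_lt (Set.mem_Iio.mp hu)
      simp only [hwdef, hψ, if_pos hud]
    have hgL' : ∀ t ∈ Set.Ioo 0 d, deriv w t = c * (1/d) - s * deriv y t :=
      fun t ht => (hgL t ht).deriv
    have hgL2 : ∀ t ∈ Set.Ioo 0 d,
        HasDerivAt (deriv w) (-(s * deriv (deriv y) t)) t := by
      intro t ht
      have hyd2 := (hy_diff t (Or.inl ht)).2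
      have hmodel : HasDerivAt (fun u => c * (1/d) - s * deriv y u)
          (-(s * deriv (deriv y) t)) t :=
        (hyd2.hasDerivAt.const_mul s).const_sub (c * (1/d))
      apply hmodel.congr_of_eventuallyEq
      filter_upwards [isOpen_Ioo.mem_nhds ht] with u hu using hgL' u hu
    -- derivative computations on the right interval
    have hgR : ∀ t ∈ Set.Ioo d 1,
        HasDerivAt w (c * (-1/(1-d)) - s * deriv y t) t := by
      intro t ht
      have hyd := (hy_diff t (Or.inr ht)).1
      have hlin : HasDerivAt (fun u : ℝ => M + δ + c * ((1 - u) / (1 - d)))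
          (c * (-1/(1-d))) t := by
        have h0 : HasDerivAt (fun u : ℝ => (1 - u) / (1 - d)) (-1/(1-d)) t := by
          simpa using (((hasDerivAt_id t).const_sub 1).div_const (1 - d))
        simpa using (h0.const_mul c).const_add (M + δ)
      have hmodel : HasDerivAt (fun u => M + δ + c * ((1 - u) / (1 - d)) - s * y u)
          (c * (-1/(1-d)) - s * deriv y t) t := hlin.sub (hyd.hasDerivAt.const_mul s)
      apply hmodel.congr_of_eventuallyEq
      filter_upwards [Ioi_mem_nhds ht.1] with u hu
      have hud : ¬ u ≤ d := not_le.2 (Set.mem_Ioi.mp hu)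
      simp only [hwdef, hψ, if_neg hud]
    have hgR' : ∀ t ∈ Set.Ioo d 1, deriv w t = c * (-1/(1-d)) - s * deriv y t :=
      fun t ht => (hgR t ht).deriv
    have hgR2 : ∀ t ∈ Set.Ioo d 1,
        HasDerivAt (deriv w) (-(s * deriv (deriv y) t)) t := by
      intro t ht
      have hyd2 := (hy_diff t (Or.inr ht)).2
      have hmodel : HasDerivAt (fun u => c * (-1/(1-d)) - s * deriv y u)
          (-(s * deriv (deriv y) t)) t :=
        (hyd2.hasDerivAt.const_mul s).const_sub (c * (-1/(1-d)))
      apply hmodel.congr_of_eventuallyEq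
      filter_upwards [isOpen_Ioo.mem_nhds ht] with u hu using hgR' u hu
    -- one-sided derivatives at d
    have hwl : HasDerivWithinAt w (c * (1/d) - s * yd) (Set.Iic d) d := by
      have hlin : HasDerivAt (fun u : ℝ => M + δ + c * (u / d)) (c * (1/d)) d := by
        simpa using (((hasDerivAt_id d).div_const d).const_mul c).const_add (M + δ)
      have hmodel := hlin.hasDerivWithinAt.sub (hLder.const_mul s)
      apply hmodel.congr
      · intro u hu
        have hud : u ≤ d := hu
        simp only [hwdef, hψ, if_pos hud, Pi.sub_apply]
      · simp only [hwdef, hψ, if_pos (le_refl d), Pi.sub_apply]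
    have hwr : HasDerivWithinAt w (c * (-1/(1-d)) - s * yd) (Set.Ici d) d := by
      have hlin : HasDerivAt (fun u : ℝ => M + δ + c * ((1 - u) / (1 - d)))
          (c * (-1/(1-d))) d := by
        have h0 : HasDerivAt (fun u : ℝ => (1 - u) / (1 - d)) (-1/(1-d)) d := by
          simpa using (((hasDerivAt_id d).const_sub 1).div_const (1 - d))
        simpa using (h0.const_mul c).const_add (M + δ)
      have hmodel := hlin.hasDerivWithinAt.sub (hRder.const_mul s)
      apply hmodel.congr
      · intro u hu
        rcases eq_or_lt_of_le (Set.mem_Ici.mp hu) with h | h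
        · simp only [hwdef, hψ, ← h, if_pos (le_refl d), div_self hd0.ne', div_self h1d.ne', Pi.sub_apply]
        · simp only [hwdef, hψ, if_neg (not_le.2 h), Pi.sub_apply]
      · simp only [hwdef, hψ, if_pos (le_refl d), div_self hd0.ne', div_self h1d.ne', Pi.sub_apply]
    -- apply comparison lemma
    have hnonneg : ∀ t ∈ Set.Icc (0:ℝ) 1, 0 ≤ w t := by
      apply key_nonneg w d (c * (1/d) - s * yd) (c * (-1/(1-d)) - s * yd)
        hd0 hd1 hwc hw0 hw1
      · intro t ht
        rcases ht with ht | ht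
        · exact ⟨(hgL t ht).differentiableAt, (hgL2 t ht).differentiableAt⟩
        · exact ⟨(hgR t ht).differentiableAt, (hgR2 t ht).differentiableAt⟩
      · intro t ht hwt hd1t hd2t
        rcases ht with ht | ht
        · -- left interval
          have e1 := hgL' t ht
          have e2 : deriv (deriv w) t = -(s * deriv (deriv y) t) := (hgL2 t ht).deriv
          rw [e1] at hd1t
          rw [e2] at hd2t
          have hsy : s * deriv y t = c * (1/d) := by linarith
          have heqs : ε * (s * deriv (deriv y) t) + a t * (s * deriv y t)
              - b t * (s * y t) = s * f t := by
            linear_combination s * heq t (Or.inl ht)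
          have hψt : ψ t = t / d := if_pos ht.2.le
          have hwt' : M + δ + c * (t/d) - s * y t ≤ 0 := by
            simpa only [hwdef, hψt] using hwt
          have hψnn : 0 ≤ t / d := div_nonneg ht.1.le hd0.le
          have hsynn : 0 ≤ s * y t := by nlinarith
          have hb' := hb t (Or.inl ht)
          have ha' := haL t ht
          have hfx : -F ≤ s * f t := by
            have h := abs_le.mp (hF t (Or.inl ht))
            rcases hs with h' | h' <;> rw [h'] <;> linarith
          have hθ1 : θ ≤ α₁ / d := min_le_left _ _
          have hcd : 0 < c * (1/d) := by positivity
          have h5 : a t * (c * (1/d)) ≤ -α₁ * (c * (1/d)) :=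
            mul_le_mul_of_nonneg_right ha' hcd.le
          have h6 : θ * c ≤ (α₁ / d) * c := mul_le_mul_of_nonneg_right hθ1 hc0.le
          have h7 : -α₁ * (c * (1/d)) = -((α₁/d) * c) := by ring
          have h8 : 0 ≤ ε * (-(s * deriv (deriv y) t)) :=
            mul_nonneg hε.le hd2t
          have h9 : 0 ≤ b t * (s * y t) := mul_nonneg hb' hsynn
          rw [hsy] at heqs
          nlinarith
        · -- right interval
          have e1 := hgR' t ht
          have e2 : deriv (deriv w) t = -(s * deriv (deriv y) t) := (hgR2 t ht).deriv
          rw [e1] at hd1t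
          rw [e2] at hd2t
          have hsy : s * deriv y t = c * (-1/(1-d)) := by linarith
          have heqs : ε * (s * deriv (deriv y) t) + a t * (s * deriv y t)
              - b t * (s * y t) = s * f t := by
            linear_combination s * heq t (Or.inr ht)
          have hψt : ψ t = (1 - t) / (1 - d) := if_neg (not_le.2 ht.1)
          have hwt' : M + δ + c * ((1-t)/(1-d)) - s * y t ≤ 0 := by
            simpa only [hwdef, hψt] using hwt
          have hψnn : 0 ≤ (1-t) / (1-d) := div_nonneg (by linarith [ht.2]) h1d.le
          have hsynn : 0 ≤ s * y t := by nlinarith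
          have hb' := hb t (Or.inr ht)
          have ha' := haR t ht
          have hfx : -F ≤ s * f t := by
            have h := abs_le.mp (hF t (Or.inr ht))
            rcases hs with h' | h' <;> rw [h'] <;> linarith
          have hθ1 : θ ≤ α₂ / (1 - d) := min_le_right _ _
          have hcd : 0 < c * (1/(1-d)) := by positivity
          have h5 : α₂ * (c * (1/(1-d))) ≤ a t * (c * (1/(1-d))) :=
            mul_le_mul_of_nonneg_right ha' hcd.le
          have h6 : θ * c ≤ (α₂ / (1-d)) * c := mul_le_mul_of_nonneg_right hθ1 hc0.le
          have h7 : α₂ * (c * (1/(1-d))) = (α₂/(1-d)) * c := by ring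
          have h8 : 0 ≤ ε * (-(s * deriv (deriv y) t)) :=
            mul_nonneg hε.le hd2t
          have h9 : 0 ≤ b t * (s * y t) := mul_nonneg hb' hsynn
          have h10 : a t * (c * (-1/(1-d))) = -(a t * (c * (1/(1-d)))) := by ring
          rw [hsy] at heqs
          nlinarith
      · exact hwl
      · exact hwr
      · -- kink
        intro hl hr
        have hp1 : 0 < c * (1/d) := by positivity
        have hp2 : c * (-1/(1-d)) = -(c * (1/(1-d))) := by ring
        have hp3 : 0 < c * (1/(1-d)) := by positivity
        linarith
    -- conclude
    have hwx := hnonneg x hx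
    have hψle : ψ x ≤ 1 := by
      by_cases h : x ≤ d
      · rw [hψ]; simp only [if_pos h]
        exact div_le_one_of_le₀ h hd0.le
      · rw [hψ]; simp only [if_neg h]
        apply div_le_one_of_le₀ _ h1d.le
        push_neg at h
        linarith
    have : M + δ + c * ψ x - s * y x ≤ M + δ + c * 1 - s * y x := by nlinarith
    simp only [hwdef] at hwx
    nlinarith
  -- pass to the limit δ → 0
  apply le_of_forall_pos_le_add
  intro e he
  have hδ : 0 < e * θ / (θ + 1) := by positivity
  have hy1 := main _ hδ 1 (Or.inl rfl)
  have hy2 := main _ hδ (-1) (Or.inr rfl)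
  have habs : |y x| ≤ M + e * θ / (θ + 1) + (F + e * θ / (θ + 1)) / θ :=
    abs_le.mpr ⟨by linarith, by linarith⟩
  have hθ1 : (0:ℝ) < θ + 1 := by linarith
  have hexp : (F + e * θ / (θ + 1)) / θ = F / θ + e / (θ + 1) := by
    rw [add_div, div_div, mul_comm (θ + 1) θ, mul_comm e θ, mul_div_mul_left _ _ hθ.ne']
  have hsum : e * θ / (θ + 1) + e / (θ + 1) = e := by
    field_simp [hθ1.ne']
  rw [hexp] at habs
  linarith
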